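/- Let n ≥ 2 and γ ≥ 0. Define on [0,1]^n the functions π⁽⁰⁾(p) = p̄ and π⁽¹⁾(p) = −p̄{(n−1) + nγ(1−p̄)} + (2/n)∑_{i<j} pᵢpⱼ, where p̄ = (1/n)∑ᵢ pᵢ. Then L₀ π⁽¹⁾ = L₁ π⁽⁰⁾, where L₀ = ∑ᵢ (xᵢ(1−xᵢ)/2) ∂²/∂xᵢ² + (nγ/(2(n−1))) ∑ᵢ (x̄ − xᵢ) ∂/∂xᵢ and L₁ = (γ/(2(n−1))) ∑ᵢ {(1−2xᵢ)∑_{j≠i} xⱼ + (n−1)xᵢ} ∂/∂xᵢ. Consequently π = π⁽⁰⁾ + b π⁽¹⁾ satisfies (L₀ − bL₁)π = O(b²), i.e., L₀π⁽⁰⁾ = 0 and the first-order-in-b terms cancel. -/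

import Mathlib

/-- Partial derivative of `f : (Fin n → ℝ) → ℝ` in coordinate `i` at `p`. -/
noncomputable def pderiv' {n : ℕ} (f : (Fin n → ℝ) → ℝ) (i : Fin n) (p : Fin n → ℝ) : ℝ :=
  deriv (fun t => f (Function.update p i t)) (p i)

/-- Second partial derivative of `f` in coordinate `i` at `p`. -/
noncomputable def pderiv2' {n : ℕ} (f : (Fin n → ℝ) → ℝ) (i : Fin n) (p : Fin n → ℝ) : ℝ :=
  deriv (deriv (fun t => f (Function.update p i t))) (p i)

lemma deriv_quad (A B C : ℝ) :
    deriv (fun t : ℝ => A*t^2 + B*t + C) = fun t => 2*A*t + B := by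
  funext t
  have h1 := (hasDerivAt_pow 2 t).const_mul A
  have h2 := (hasDerivAt_id t).const_mul B
  have h := (h1.add h2).add_const C
  have h' : HasDerivAt (fun t : ℝ => A*t^2 + B*t + C) (2*A*t + B) t := by
    refine h.congr_deriv ?_
    push_cast; ring
  exact h'.deriv

lemma deriv2_quad (A B C : ℝ) :
    deriv (deriv (fun t : ℝ => A*t^2 + B*t + C)) = fun _ => 2*A := by
  rw [deriv_quad]
  have h : (fun t : ℝ => 2*A*t + B) = fun t : ℝ => (0:ℝ)*t^2 + (2*A)*t + B := by
    funext t; ring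
  rw [h, deriv_quad]
  funext t; ring

lemma pair_sum_eq {n : ℕ} (q : Fin n → ℝ) :
    (∑ i, ∑ j, if i < j then q i * q j else 0) = ((∑ i, q i)^2 - ∑ i, (q i)^2)/2 := by
  have h : (∑ i, q i)^2 = ∑ i, ∑ j, q i * q j := by
    rw [sq, Finset.sum_mul_sum]
  have tri : ∀ i j : Fin n, q i * q j =
      (if i < j then q i * q j else 0) + (if j < i then q i * q j else 0) +
      (if i = j then q i * q j else 0) := by
    intro i j
    rcases lt_trichotomy i j with h'|h'|h'
    · simp [h', asymm h', h'.ne]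
    · simp [h', lt_irrefl]
    · simp [h', asymm h', h'.ne']
  have hswap : (∑ i, ∑ j, if j < i then q i * q j else 0)
      = ∑ i, ∑ j, if i < j then q i * q j else 0 := by
    rw [Finset.sum_comm]
    refine Finset.sum_congr rfl fun i _ => Finset.sum_congr rfl fun j _ => ?_
    rw [mul_comm]
  have hdiag : (∑ i : Fin n, ∑ j, if i = j then q i * q j else 0) = ∑ i, (q i)^2 := by
    refine Finset.sum_congr rfl fun i _ => ?_
    rw [Finset.sum_ite_eq]
    simp [sq]
  have key : (∑ i, q i)^2
      = (∑ i, ∑ j, if i < j then q i * q j else 0) * 2 + ∑ i, (q i)^2 := by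
    rw [h]
    calc ∑ i, ∑ j, q i * q j
        = ∑ i, ∑ j, ((if i < j then q i * q j else 0) + (if j < i then q i * q j else 0) +
            (if i = j then q i * q j else 0)) := by
          refine Finset.sum_congr rfl fun i _ => Finset.sum_congr rfl fun j _ => tri i j
      _ = (∑ i, ∑ j, if i < j then q i * q j else 0)
            + (∑ i, ∑ j, if j < i then q i * q j else 0)
            + (∑ i : Fin n, ∑ j, if i = j then q i * q j else 0) := by
          simp [Finset.sum_add_distrib]
      _ = (∑ i, ∑ j, if i < j then q i * q j else 0) * 2 + ∑ i, (q i)^2 := by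
          rw [hswap, hdiag]; ring
  linarith

/-- with π⁽⁰⁾(p)=p̄ and
π⁽¹⁾(p) = −p̄{(n−1)+nγ(1−p̄)} + (2/n)∑_{i<j}pᵢpⱼ, one has L₀π⁽⁰⁾ = 0 and
L₀π⁽¹⁾ = L₁π⁽⁰⁾, so that π = π⁽⁰⁾ + bπ⁽¹⁾ satisfies (L₀ − bL₁)π = O(b²). -/
theorem stmt1 (n : ℕ) (hn : 2 ≤ n) (γ : ℝ) (hγ : 0 ≤ γ)
    (π0 π1 : (Fin n → ℝ) → ℝ)
    (hπ0 : ∀ p : Fin n → ℝ, π0 p = (∑ i, p i) / n)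
    (hπ1 : ∀ p : Fin n → ℝ, π1 p =
      -((∑ i, p i) / n) * (((n : ℝ) - 1) + n * γ * (1 - (∑ i, p i) / n))
        + (2 / n) * ∑ i, ∑ j, if i < j then p i * p j else 0)
    (p : Fin n → ℝ) (hp : ∀ i, p i ∈ Set.Icc (0:ℝ) 1) :
    ((∑ i, p i * (1 - p i) / 2 * pderiv2' π0 i p)
      + ((n : ℝ) * γ / (2 * ((n : ℝ) - 1))) *
          ∑ i, ((∑ j, p j) / n - p i) * pderiv' π0 i p = 0)
    ∧
    ((∑ i, p i * (1 - p i) / 2 * pderiv2' π1 i p)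
      + ((n : ℝ) * γ / (2 * ((n : ℝ) - 1))) *
          ∑ i, ((∑ j, p j) / n - p i) * pderiv' π1 i p
      = (γ / (2 * ((n : ℝ) - 1))) *
          ∑ i, ((1 - 2 * p i) * (∑ j ∈ Finset.univ.erase i, p j)
                  + ((n : ℝ) - 1) * p i) * pderiv' π0 i p) := by
  have hn2 : (2:ℝ) ≤ (n:ℝ) := by exact_mod_cast hn
  have hn0 : (n:ℝ) ≠ 0 := by linarith
  have hn1 : (n:ℝ) - 1 ≠ 0 := by intro h; nlinarith
  set S : ℝ := ∑ i, p i with hS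
  set Q : ℝ := ∑ i, (p i)^2 with hQ
  -- sums over updates
  have s1 : ∀ (i : Fin n) (t : ℝ), (∑ j, Function.update p i t j) = t + (S - p i) := by
    intro i t
    rw [Finset.sum_update_of_mem (Finset.mem_univ i), ← Finset.erase_eq,
      Finset.sum_erase_eq_sub (Finset.mem_univ i)]
  have s2 : ∀ (i : Fin n) (t : ℝ),
      (∑ j, (Function.update p i t j)^2) = t^2 + (Q - (p i)^2) := by
    intro i t
    have hupd : ∀ j, (Function.update p i t j)^2
        = Function.update (fun k => (p k)^2) i (t^2) j := by
      intro j
      rcases eq_or_ne j i with h|h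
      · subst h; simp
      · simp [Function.update_of_ne h]
    calc (∑ j, (Function.update p i t j)^2)
        = ∑ j, Function.update (fun k => (p k)^2) i (t^2) j :=
          Finset.sum_congr rfl fun j _ => hupd j
      _ = t^2 + (Q - (p i)^2) := by
          rw [Finset.sum_update_of_mem (Finset.mem_univ i), ← Finset.erase_eq,
            Finset.sum_erase_eq_sub (Finset.mem_univ i)]
  -- representations as quadratics in t
  have hrep0 : ∀ i : Fin n, (fun t => π0 (Function.update p i t))
      = fun t => (0:ℝ)*t^2 + (1/n)*t + ((S - p i)/n) := by
    intro i; funext t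
    rw [hπ0, s1 i t]
    field_simp
    ring
  have hrep1 : ∀ i : Fin n, (fun t => π1 (Function.update p i t))
      = fun t => (γ/n)*t^2
        + (-(((n:ℝ)-1)/n) - γ + 2*γ*(S - p i)/n + 2*(S - p i)/n)*t
        + (-(S - p i)*((n:ℝ)-1)/n - γ*(S - p i) + γ*(S - p i)^2/n
            + ((S - p i)^2 - (Q - (p i)^2))/n) := by
    intro i; funext t
    rw [hπ1, pair_sum_eq, s1 i t, s2 i t]
    field_simp
    ring
  -- derivatives
  have pd0 : ∀ i : Fin n, pderiv' π0 i p = 1/n := by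
    intro i
    unfold pderiv'
    rw [hrep0 i, deriv_quad]
    ring
  have pdd0 : ∀ i : Fin n, pderiv2' π0 i p = 0 := by
    intro i
    unfold pderiv2'
    rw [hrep0 i, deriv2_quad]
    ring
  have pd1 : ∀ i : Fin n, pderiv' π1 i p
      = 2*(γ/n)*(p i) + (-(((n:ℝ)-1)/n) - γ + 2*γ*(S - p i)/n + 2*(S - p i)/n) := by
    intro i
    unfold pderiv'
    rw [hrep1 i, deriv_quad]
  have pdd1 : ∀ i : Fin n, pderiv2' π1 i p = 2*(γ/n) := by
    intro i
    unfold pderiv2'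
    rw [hrep1 i, deriv2_quad]
  -- generic quadratic sum
  have hsum' : ∀ a b c : ℝ, (∑ i : Fin n, (a + b * p i + c * (p i)^2))
      = (n:ℝ)*a + b*S + c*Q := by
    intro a b c
    rw [Finset.sum_add_distrib, Finset.sum_add_distrib, Finset.sum_const,
      Finset.card_univ, Fintype.card_fin, nsmul_eq_mul,
      ← Finset.mul_sum, ← Finset.mul_sum, ← hS, ← hQ]
  have hC : ∀ i : Fin n, (∑ j ∈ Finset.univ.erase i, p j) = S - p i := by
    intro i
    rw [Finset.sum_erase_eq_sub (Finset.mem_univ i)]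
  constructor
  · -- part 1
    have e1 : (∑ i, p i * (1 - p i) / 2 * pderiv2' π0 i p) = 0 := by
      refine Finset.sum_eq_zero fun i _ => ?_
      rw [pdd0 i]; ring
    have e2 : (∑ i, ((∑ j, p j) / n - p i) * pderiv' π0 i p)
        = (n:ℝ)*(S/n*(1/n)) + (-(1/n))*S + 0*Q := by
      rw [← hsum' (S/n*(1/n)) (-(1/n)) 0]
      refine Finset.sum_congr rfl fun i _ => ?_
      rw [pd0 i, ← hS]
      ring
    rw [e1, e2]
    field_simp
    ring
  · -- part 2
    have e1 : (∑ i, p i * (1 - p i) / 2 * pderiv2' π1 i p)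
        = (n:ℝ)*0 + (γ/n)*S + (-(γ/n))*Q := by
      rw [← hsum' 0 (γ/n) (-(γ/n))]
      refine Finset.sum_congr rfl fun i _ => ?_
      rw [pdd1 i]
      ring
    have e2 : (∑ i, ((∑ j, p j) / n - p i) * pderiv' π1 i p)
        = (n:ℝ)*(S/n*(-(((n:ℝ)-1)/n) - γ + 2*γ*S/n + 2*S/n))
          + (-2*S/n^2 - (-(((n:ℝ)-1)/n) - γ + 2*γ*S/n + 2*S/n))*S + (2/n)*Q := by
      rw [← hsum']
      refine Finset.sum_congr rfl fun i _ => ?_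
      rw [pd1 i, ← hS]
      ring
    have e3 : (∑ i, ((1 - 2 * p i) * (∑ j ∈ Finset.univ.erase i, p j)
                  + ((n : ℝ) - 1) * p i) * pderiv' π0 i p)
        = (n:ℝ)*(S/n) + ((((n:ℝ)-1) - 2*S - 1)/n)*S + (2/n)*Q := by
      rw [← hsum']
      refine Finset.sum_congr rfl fun i _ => ?_
      rw [pd0 i, hC i]
      ring
    rw [e1, e2, e3]
    field_simp
    ring
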